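/- Let ι be a finite index set, k ≥ 1 a natural number, δ ≥ 0 a real, and p, q : ι → ℝ families of nonnegative reals such that |p(i) − q(i)| ≤ δ for every i ∈ ι. Then |Σ_{i ∈ ι} p(i)^k − Σ_{i ∈ ι} q(i)^k| ≤ k·δ·(Σ_{i ∈ ι} p(i)^{k−1} + Σ_{i ∈ ι} q(i)^{k−1}). -/
import Mathlib

lemma pow_diff_pointwise (k : ℕ) (hk : 1 ≤ k) (δ : ℝ) (a b : ℝ)
    (ha : 0 ≤ a) (hb : 0 ≤ b) (hab : |a - b| ≤ δ) :
    |a ^ k - b ^ k| ≤ (k : ℝ) * δ * (a ^ (k - 1) + b ^ (k - 1)) := by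
  have key : a ^ k - b ^ k = (∑ i ∈ Finset.range k, a ^ i * b ^ (k - 1 - i)) * (a - b) :=
    (geom_sum₂_mul a b k).symm
  rw [key, abs_mul]
  have hδ0 : 0 ≤ δ := le_trans (abs_nonneg _) hab
  have hterm : ∀ i ∈ Finset.range k, a ^ i * b ^ (k - 1 - i) ≤ a ^ (k - 1) + b ^ (k - 1) := by
    intro i hi
    rw [Finset.mem_range] at hi
    have hi' : i ≤ k - 1 := Nat.le_sub_one_of_lt hi
    rcases le_total a b with h | h
    · calc a ^ i * b ^ (k - 1 - i) ≤ b ^ i * b ^ (k - 1 - i) := by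
            apply mul_le_mul_of_nonneg_right (pow_le_pow_left₀ ha h i) (pow_nonneg hb _)
        _ = b ^ (k - 1) := by rw [← pow_add]; congr 1; omega
        _ ≤ a ^ (k - 1) + b ^ (k - 1) := le_add_of_nonneg_left (pow_nonneg ha _)
    · calc a ^ i * b ^ (k - 1 - i) ≤ a ^ i * a ^ (k - 1 - i) := by
            apply mul_le_mul_of_nonneg_left (pow_le_pow_left₀ hb h _) (pow_nonneg ha _)
        _ = a ^ (k - 1) := by rw [← pow_add]; congr 1; omega
        _ ≤ a ^ (k - 1) + b ^ (k - 1) := le_add_of_nonneg_right (pow_nonneg hb _)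
  have hsum : |∑ i ∈ Finset.range k, a ^ i * b ^ (k - 1 - i)| ≤
      (k : ℝ) * (a ^ (k - 1) + b ^ (k - 1)) := by
    calc |∑ i ∈ Finset.range k, a ^ i * b ^ (k - 1 - i)|
        ≤ ∑ i ∈ Finset.range k, a ^ i * b ^ (k - 1 - i) := by
          rw [abs_of_nonneg]; exact Finset.sum_nonneg fun i _ =>
            mul_nonneg (pow_nonneg ha _) (pow_nonneg hb _)
      _ ≤ ∑ i ∈ Finset.range k, (a ^ (k - 1) + b ^ (k - 1)) := Finset.sum_le_sum hterm
      _ = (k : ℝ) * (a ^ (k - 1) + b ^ (k - 1)) := by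
          rw [Finset.sum_const, Finset.card_range, nsmul_eq_mul]
  calc |∑ i ∈ Finset.range k, a ^ i * b ^ (k - 1 - i)| * |a - b|
      ≤ ((k : ℝ) * (a ^ (k - 1) + b ^ (k - 1))) * δ :=
        mul_le_mul hsum hab (abs_nonneg _) (by positivity)
    _ = (k : ℝ) * δ * (a ^ (k - 1) + b ^ (k - 1)) := by ring

/-- Key estimate of the Lipschitz constant of persistence moments: if two finite
families of nonnegative reals differ pointwise by at most `δ`, then their `k`-th
power sums differ by at most `k·δ·(Σ p^{k-1} + Σ q^{k-1})`. -/
theorem power_sum_diff_bound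
    {ι : Type*} [Fintype ι] (k : ℕ) (hk : 1 ≤ k)
    (δ : ℝ) (hδ : 0 ≤ δ)
    (p q : ι → ℝ) (hp : ∀ i, 0 ≤ p i) (hq : ∀ i, 0 ≤ q i)
    (hpq : ∀ i, |p i - q i| ≤ δ) :
    |∑ i, p i ^ k - ∑ i, q i ^ k| ≤
      (k : ℝ) * δ * ((∑ i, p i ^ (k - 1)) + ∑ i, q i ^ (k - 1)) := by
  rw [← Finset.sum_sub_distrib]
  calc |∑ i, (p i ^ k - q i ^ k)| ≤ ∑ i, |p i ^ k - q i ^ k| :=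
        Finset.abs_sum_le_sum_abs _ _
    _ ≤ ∑ i, (k : ℝ) * δ * (p i ^ (k - 1) + q i ^ (k - 1)) :=
        Finset.sum_le_sum fun i _ => pow_diff_pointwise k hk δ (p i) (q i) (hp i) (hq i) (hpq i)
    _ = (k : ℝ) * δ * ((∑ i, p i ^ (k - 1)) + ∑ i, q i ^ (k - 1)) := by
        rw [← Finset.mul_sum, Finset.sum_add_distrib]
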